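/- Let τ₁, τ₂, τ₃ be permutations of a finite set Γ = mov(τ₁) ∪ mov(τ₂) ∪ mov(τ₃) satisfying (T1), (T2), (T3), and additionally (T4): the group ⟨τ₁,τ₂,τ₃⟩ acts transitively on Γ. Then the latin bitrade (T⊛, T⊚) obtained from the cycles of τ₁, τ₂, τ₃ is indecomposable: whenever (U⊛, U⊚) is a latin bitrade with ∅ ≠ U⊛ ⊆ T⊛ and U⊚ ⊆ T⊚, then (U⊛, U⊚) = (T⊛, T⊚). -/

import Mathlib

/-- `Agree2 r a b` says that the triples `a` and `b` agree in the two
coordinates other than `r` (coordinates indexed by `Fin 3`). -/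
def Agree2 {A₁ A₂ A₃ : Type*} (r : Fin 3) (a b : A₁ × A₂ × A₃) : Prop :=
  if r = 0 then a.2.1 = b.2.1 ∧ a.2.2 = b.2.2
  else if r = 1 then a.1 = b.1 ∧ a.2.2 = b.2.2
  else a.1 = b.1 ∧ a.2.1 = b.2.1

/-- `CoordNe r a b` says that the triples `a` and `b` differ in coordinate `r`. -/
def CoordNe {A₁ A₂ A₃ : Type*} (r : Fin 3) (a b : A₁ × A₂ × A₃) : Prop :=
  if r = 0 then a.1 ≠ b.1
  else if r = 1 then a.2.1 ≠ b.2.1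
  else a.2.2 ≠ b.2.2

/-- A partial latin square: any two triples agreeing in two coordinates are equal. -/
def IsPLS {A₁ A₂ A₃ : Type*} (T : Set (A₁ × A₂ × A₃)) : Prop :=
  ∀ a ∈ T, ∀ b ∈ T, ∀ r : Fin 3, Agree2 r a b → a = b

/-- A latin bitrade `(T₁, T₂)`: two disjoint partial latin squares such that each triple
of one is matched, for each pair of coordinates, by a unique triple of the other
agreeing in those two coordinates. -/
structure IsBitrade {A₁ A₂ A₃ : Type*} (T₁ T₂ : Set (A₁ × A₂ × A₃)) : Prop where
  pls₁ : IsPLS T₁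
  pls₂ : IsPLS T₂
  disj : T₁ ∩ T₂ = ∅
  r2 : ∀ a ∈ T₁, ∀ r : Fin 3, ∃! b, b ∈ T₂ ∧ Agree2 r a b
  r3 : ∀ a ∈ T₂, ∀ r : Fin 3, ∃! b, b ∈ T₁ ∧ Agree2 r a b

/-- The set of cycles of a permutation, viewed as the quotient of the underlying set
by the same-cycle relation. -/
abbrev CycleOf {Γ : Type*} (σ : Equiv.Perm Γ) := Quotient (Equiv.Perm.SameCycle.setoid σ)

/-- The partial latin square `T⊛` of Construction: triples of cycles
`(ρ₁, ρ₂, ρ₃)` (one of each `τ_i`) through a common point. -/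
def Tstar {Γ : Type*} (τ : Fin 3 → Equiv.Perm Γ) :
    Set (CycleOf (τ 0) × CycleOf (τ 1) × CycleOf (τ 2)) :=
  {ρ | ∃ x : Γ, Quotient.mk _ x = ρ.1 ∧ Quotient.mk _ x = ρ.2.1 ∧ Quotient.mk _ x = ρ.2.2}

/-- The partial latin square `T⊚` of Construction: triples of cycles
`(ρ₁, ρ₂, ρ₃)` through distinct points `x, x', x''` with
`xτ₁ = x'`, `x'τ₂ = x''`, `x''τ₃ = x`. -/
def Tcirc {Γ : Type*} (τ : Fin 3 → Equiv.Perm Γ) :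
    Set (CycleOf (τ 0) × CycleOf (τ 1) × CycleOf (τ 2)) :=
  {ρ | ∃ x x' x'' : Γ, x ≠ x' ∧ x' ≠ x'' ∧ x ≠ x'' ∧
    τ 0 x = x' ∧ τ 1 x' = x'' ∧ τ 2 x'' = x ∧
    Quotient.mk _ x = ρ.1 ∧ Quotient.mk _ x' = ρ.2.1 ∧ Quotient.mk _ x'' = ρ.2.2}

theorem Equiv.Perm.inv_apply_self {α : Type*} (f : Equiv.Perm α) (x : α) : f⁻¹ (f x) = x :=
  f.symm_apply_apply x

theorem Equiv.Perm.apply_inv_self {α : Type*} (f : Equiv.Perm α) (x : α) : f (f⁻¹ x) = x :=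
  f.apply_symm_apply x

namespace ConstructionAux

open Equiv Equiv.Perm

variable {Γ : Type*} (τ : Fin 3 → Equiv.Perm Γ)

/-- The cycle through `x` of `τ i`. -/
def qk (i : Fin 3) (x : Γ) : CycleOf (τ i) := Quotient.mk _ x

theorem qk_eq {i : Fin 3} {x y : Γ} : qk τ i x = qk τ i y ↔ (τ i).SameCycle x y := by
  unfold qk
  exact ⟨Quotient.exact, fun h => Quotient.sound (s := Equiv.Perm.SameCycle.setoid (τ i)) h⟩

/-- The `T⊛`-triple through `x`. -/
def sTrip (x : Γ) : CycleOf (τ 0) × CycleOf (τ 1) × CycleOf (τ 2) :=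
  (qk τ 0 x, qk τ 1 x, qk τ 2 x)

/-- The `T⊚`-triple starting at `x`. -/
def cTrip (x : Γ) : CycleOf (τ 0) × CycleOf (τ 1) × CycleOf (τ 2) :=
  (qk τ 0 x, qk τ 1 (τ 0 x), qk τ 2 (τ 1 (τ 0 x)))

theorem mem_Tstar {a : CycleOf (τ 0) × CycleOf (τ 1) × CycleOf (τ 2)} :
    a ∈ Tstar τ ↔ ∃ x, sTrip τ x = a := by
  constructor
  · rintro ⟨x, h1, h2, h3⟩
    exact ⟨x, Prod.ext h1 (Prod.ext h2 h3)⟩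
  · rintro ⟨x, rfl⟩
    exact ⟨x, rfl, rfl, rfl⟩

theorem Tcirc_sub {a : CycleOf (τ 0) × CycleOf (τ 1) × CycleOf (τ 2)}
    (h : a ∈ Tcirc τ) : ∃ x, cTrip τ x = a := by
  obtain ⟨x, x', x'', _, _, _, h0, h1, h2, e1, e2, e3⟩ := h
  subst h0; subst h1
  exact ⟨x, Prod.ext e1 (Prod.ext e2 e3)⟩

theorem agree2_zero {A₁ A₂ A₃ : Type*} {a b : A₁ × A₂ × A₃} :
    Agree2 0 a b ↔ a.2.1 = b.2.1 ∧ a.2.2 = b.2.2 := by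
  simp [Agree2]

theorem agree2_one {A₁ A₂ A₃ : Type*} {a b : A₁ × A₂ × A₃} :
    Agree2 1 a b ↔ a.1 = b.1 ∧ a.2.2 = b.2.2 := by
  simp [Agree2]

theorem agree2_two {A₁ A₂ A₃ : Type*} {a b : A₁ × A₂ × A₃} :
    Agree2 2 a b ↔ a.1 = b.1 ∧ a.2.1 = b.2.1 := by
  simp [Agree2]

theorem agree2_symm {A₁ A₂ A₃ : Type*} {r : Fin 3} {a b : A₁ × A₂ × A₃}
    (h : Agree2 r a b) : Agree2 r b a := by
  unfold Agree2 at h ⊢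
  split_ifs at h ⊢ <;> exact ⟨h.1.symm, h.2.symm⟩

section Hyps

variable (t1 : ∀ x, τ 2 (τ 1 (τ 0 x)) = x)
variable (t2 : ∀ i j : Fin 3, i < j → ∀ x y : Γ, x ≠ y →
      ¬((τ i).SameCycle x y ∧ (τ j).SameCycle x y))
variable (t3 : ∀ i : Fin 3, ∀ x : Γ, τ i x ≠ x)

include t1 in
/-- `x`, `τ₁(τ₀ x)` and `x` lie on a common `τ₂`-cycle. -/
theorem sc2_fact (x : Γ) : (τ 2).SameCycle (τ 1 (τ 0 x)) x :=
  ⟨1, by rw [zpow_one]; exact t1 x⟩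

include t2 t3 in
theorem ne_110 (x : Γ) : x ≠ τ 1 (τ 0 x) := by
  intro h
  refine t2 0 1 (by decide) x (τ 0 x) (Ne.symm (t3 0 x)) ⟨⟨1, by rw [zpow_one]⟩, ?_⟩
  exact Equiv.Perm.SameCycle.symm ⟨1, by rw [zpow_one, ← h]⟩

include t1 t2 t3 in
theorem cTrip_mem (x : Γ) : cTrip τ x ∈ Tcirc τ := by
  refine ⟨x, τ 0 x, τ 1 (τ 0 x), Ne.symm (t3 0 x), Ne.symm (t3 1 (τ 0 x)),
    ne_110 τ t2 t3 x, rfl, rfl, t1 x, rfl, rfl, rfl⟩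

include t1 t2 in
theorem L1 {x y : Γ} (h : Agree2 1 (sTrip τ x) (cTrip τ y)) : x = y := by
  obtain ⟨h0, h2⟩ := agree2_one.mp h
  by_contra hne
  exact t2 0 2 (by decide) x y hne
    ⟨(qk_eq τ).mp h0, ((qk_eq τ).mp h2).trans (sc2_fact τ t1 y)⟩

include t2 in
theorem L2 {x y : Γ} (h : Agree2 2 (sTrip τ x) (cTrip τ y)) : τ 0 y = x := by
  obtain ⟨h0, h1⟩ := agree2_two.mp h
  by_contra hne
  refine t2 0 1 (by decide) x (τ 0 y) (Ne.symm hne) ⟨?_, (qk_eq τ).mp h1⟩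
  exact (sameCycle_apply_right.mpr ((qk_eq τ).mp h0))

include t2 in
theorem L0 {x y : Γ} (h : Agree2 0 (sTrip τ x) (cTrip τ y)) : τ 1 (τ 0 y) = x := by
  obtain ⟨h1, h2⟩ := agree2_zero.mp h
  by_contra hne
  refine t2 1 2 (by decide) x (τ 1 (τ 0 y)) (Ne.symm hne)
    ⟨?_, (qk_eq τ).mp h2⟩
  exact (sameCycle_apply_right.mpr ((qk_eq τ).mp h1))

variable {U₁ U₂ : Set (CycleOf (τ 0) × CycleOf (τ 1) × CycleOf (τ 2))}
variable (hU : IsBitrade U₁ U₂) (hU₁ : U₁ ⊆ Tstar τ) (hU₂ : U₂ ⊆ Tcirc τ)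

include hU hU₂ t1 t2 in
theorem step1_r1 {x : Γ} (hs : sTrip τ x ∈ U₁) : cTrip τ x ∈ U₂ := by
  obtain ⟨b, ⟨hbU, hag⟩, -⟩ := hU.r2 _ hs 1
  obtain ⟨y, rfl⟩ := Tcirc_sub τ (hU₂ hbU)
  rw [L1 τ t1 t2 hag]; exact hbU

include hU hU₂ t2 in
theorem step1_r2 {x : Γ} (hs : sTrip τ x ∈ U₁) : cTrip τ ((τ 0)⁻¹ x) ∈ U₂ := by
  obtain ⟨b, ⟨hbU, hag⟩, -⟩ := hU.r2 _ hs 2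
  obtain ⟨y, rfl⟩ := Tcirc_sub τ (hU₂ hbU)
  have hy := L2 τ t2 hag
  have : (τ 0)⁻¹ x = y := by rw [← hy]; exact (τ 0).inv_apply_self y
  rw [this]; exact hbU

include hU hU₂ t2 in
theorem step1_r0 {x : Γ} (hs : sTrip τ x ∈ U₁) :
    cTrip τ ((τ 0)⁻¹ ((τ 1)⁻¹ x)) ∈ U₂ := by
  obtain ⟨b, ⟨hbU, hag⟩, -⟩ := hU.r2 _ hs 0
  obtain ⟨y, rfl⟩ := Tcirc_sub τ (hU₂ hbU)
  have hy := L0 τ t2 hag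
  have : (τ 0)⁻¹ ((τ 1)⁻¹ x) = y := by
    rw [← hy, (τ 1).inv_apply_self, (τ 0).inv_apply_self]
  rw [this]; exact hbU

include hU hU₁ t1 t2 in
theorem step2_r1 {y : Γ} (hc : cTrip τ y ∈ U₂) : sTrip τ y ∈ U₁ := by
  obtain ⟨b, ⟨hbU, hag⟩, -⟩ := hU.r3 _ hc 1
  obtain ⟨x, rfl⟩ := (mem_Tstar τ).mp (hU₁ hbU)
  rw [← L1 τ t1 t2 (agree2_symm hag)]; exact hbU

include hU hU₁ t2 in
theorem step2_r2 {y : Γ} (hc : cTrip τ y ∈ U₂) : sTrip τ (τ 0 y) ∈ U₁ := by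
  obtain ⟨b, ⟨hbU, hag⟩, -⟩ := hU.r3 _ hc 2
  obtain ⟨x, rfl⟩ := (mem_Tstar τ).mp (hU₁ hbU)
  rw [L2 τ t2 (agree2_symm hag)]; exact hbU

include hU hU₁ t2 in
theorem step2_r0 {y : Γ} (hc : cTrip τ y ∈ U₂) : sTrip τ (τ 1 (τ 0 y)) ∈ U₁ := by
  obtain ⟨b, ⟨hbU, hag⟩, -⟩ := hU.r3 _ hc 0
  obtain ⟨x, rfl⟩ := (mem_Tstar τ).mp (hU₁ hbU)
  rw [L0 τ t2 (agree2_symm hag)]; exact hbU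

end Hyps

end ConstructionAux

/-- If `τ₁, τ₂, τ₃` satisfy (T1), (T2), (T3) and additionally (T4)
(the group `⟨τ₁, τ₂, τ₃⟩` is transitive on `Γ`), then the latin bitrade `(T⊛, T⊚)`
obtained from the cycles of `τ₁, τ₂, τ₃` is indecomposable: any latin bitrade
`(U⊛, U⊚)` with `∅ ≠ U⊛ ⊆ T⊛` and `U⊚ ⊆ T⊚` equals `(T⊛, T⊚)`. -/
theorem construction_indecomposable {Γ : Type*} [Finite Γ] (τ : Fin 3 → Equiv.Perm Γ)
    (t1 : ∀ x, τ 2 (τ 1 (τ 0 x)) = x)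
    (t2 : ∀ i j : Fin 3, i < j → ∀ x y : Γ, x ≠ y →
      ¬((τ i).SameCycle x y ∧ (τ j).SameCycle x y))
    (t3 : ∀ i : Fin 3, ∀ x : Γ, τ i x ≠ x)
    (t4 : ∀ x y : Γ, ∃ g ∈ Subgroup.closure ({τ 0, τ 1, τ 2} : Set (Equiv.Perm Γ)), g x = y) :
    ∀ U₁ U₂ : Set (CycleOf (τ 0) × CycleOf (τ 1) × CycleOf (τ 2)),
      IsBitrade U₁ U₂ → U₁.Nonempty → U₁ ⊆ Tstar τ → U₂ ⊆ Tcirc τ →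
      U₁ = Tstar τ ∧ U₂ = Tcirc τ := by
  intro U₁ U₂ hU hne hU₁ hU₂
  open ConstructionAux in
  · set S : Set Γ := {x | sTrip τ x ∈ U₁} with hS
    -- closure of S under the generators and their inverses
    have c0 : ∀ x ∈ S, τ 0 x ∈ S := fun x hx =>
      step2_r2 τ t2 hU hU₁ (step1_r1 τ t1 t2 hU hU₂ hx)
    have c0' : ∀ x ∈ S, (τ 0)⁻¹ x ∈ S := fun x hx =>
      step2_r1 τ t1 t2 hU hU₁ (step1_r2 τ t2 hU hU₂ hx)
    have c1 : ∀ x ∈ S, τ 1 x ∈ S := fun x hx => by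
      have h := step2_r0 τ t2 hU hU₁ (step1_r2 τ t2 hU hU₂ hx)
      rwa [(τ 0).apply_inv_self] at h
    have c1' : ∀ x ∈ S, (τ 1)⁻¹ x ∈ S := fun x hx => by
      have h := step2_r2 τ t2 hU hU₁ (step1_r0 τ t2 hU hU₂ hx)
      rwa [(τ 0).apply_inv_self] at h
    have tau2_eq : ∀ x : Γ, τ 2 x = (τ 0)⁻¹ ((τ 1)⁻¹ x) := by
      intro x
      have h := t1 ((τ 0)⁻¹ ((τ 1)⁻¹ x))
      rw [(τ 0).apply_inv_self, (τ 1).apply_inv_self] at h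
      exact h
    have c2 : ∀ x ∈ S, τ 2 x ∈ S := fun x hx => by
      rw [tau2_eq]; exact c0' _ (c1' _ hx)
    have c2' : ∀ x ∈ S, (τ 2)⁻¹ x ∈ S := fun x hx => by
      have h : (τ 2)⁻¹ x = τ 1 (τ 0 x) := by
        rw [Equiv.Perm.inv_eq_iff_eq, tau2_eq, (τ 1).inv_apply_self, (τ 0).inv_apply_self]
      rw [h]; exact c1 _ (c0 _ hx)
    -- closure of S under the generated group
    have key : ∀ g ∈ Subgroup.closure ({τ 0, τ 1, τ 2} : Set (Equiv.Perm Γ)),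
        ∀ x : Γ, x ∈ S ↔ g x ∈ S := by
      intro g hg
      refine Subgroup.closure_induction (p := fun g _ => ∀ x : Γ, x ∈ S ↔ g x ∈ S)
        ?_ ?_ ?_ ?_ hg
      · rintro h (rfl | rfl | rfl) x
        · exact ⟨c0 x, fun hx => by
            have := c0' _ hx; rwa [(τ 0).inv_apply_self] at this⟩
        · exact ⟨c1 x, fun hx => by
            have := c1' _ hx; rwa [(τ 1).inv_apply_self] at this⟩
        · exact ⟨c2 x, fun hx => by
            have := c2' _ hx; rwa [(τ 2).inv_apply_self] at this⟩
      · intro x; simp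
      · intro a b _ _ ha hb x
        rw [Equiv.Perm.mul_apply]
        exact (hb x).trans (ha (b x))
      · intro a _ ha x
        constructor
        · intro hx
          refine (ha (a⁻¹ x)).mpr ?_
          rwa [a.apply_inv_self]
        · intro hx
          have h := (ha (a⁻¹ x)).mp hx
          rwa [a.apply_inv_self] at h
    -- S is all of Γ
    obtain ⟨a, ha⟩ := hne
    obtain ⟨x₀, rfl⟩ := (mem_Tstar τ).mp (hU₁ ha)
    have hall : ∀ y : Γ, y ∈ S := by
      intro y
      obtain ⟨g, hg, hgx⟩ := t4 x₀ y
      have := (key g hg x₀).mp ha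
      rwa [hgx] at this
    constructor
    · refine Set.Subset.antisymm hU₁ ?_
      intro b hb
      obtain ⟨x, rfl⟩ := (mem_Tstar τ).mp hb
      exact hall x
    · refine Set.Subset.antisymm hU₂ ?_
      intro b hb
      obtain ⟨x, rfl⟩ := Tcirc_sub τ hb
      exact step1_r1 τ t1 t2 hU hU₂ (hall x)
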